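/- Let φ : S_n → S_n be linear with φ(C_n) = C_n and fix t. Then there is a nonnegative vector uᵗ with exactly one nonzero coordinate such that for every b ∈ φ(A^t), the kernel {x ≥ 0 : xᵀbx = 0} equals the ray {λuᵗ : λ ≥ 0}. -/

import Mathlib

open Matrix

/-- A matrix is copositive if its quadratic form is nonnegative on the nonnegative orthant. -/
def Copositive {m : Type*} [Fintype m] (a : Matrix m m ℝ) : Prop :=
  ∀ u : m → ℝ, (∀ i, 0 ≤ u i) → 0 ≤ u ⬝ᵥ a *ᵥ u

/-- The submodule of symmetric n×n real matrices. -/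
def Sn (n : ℕ) : Submodule ℝ (Matrix (Fin n) (Fin n) ℝ) where
  carrier := {a | a.IsSymm}
  add_mem' := fun ha hb => ha.add hb
  zero_mem' := Matrix.isSymm_zero
  smul_mem' := fun c a ha => ha.smul c

/-- The copositive cone, as a subset of the symmetric matrices. -/
def Cn (n : ℕ) : Set (Sn n) := {a | Copositive a.1}

/-- The set A^t : symmetric matrices with (t,t) entry zero, all other entries positive. -/
def At (n : ℕ) (t : Fin n) : Set (Sn n) :=
  {a | a.1 t t = 0 ∧ ∀ i j, (i, j) ≠ (t, t) → 0 < a.1 i j}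

/-- T_n : symmetric nonnegative matrices with zero diagonal. -/
def Tn (n : ℕ) : Set (Sn n) := {a | (∀ i j, 0 ≤ a.1 i j) ∧ ∀ i, a.1 i i = 0}

/-- A monomial matrix: exactly one nonzero entry in each row and column. -/
def IsMonomial {n : ℕ} (m : Matrix (Fin n) (Fin n) ℝ) : Prop :=
  (∀ i, ∃! j, m i j ≠ 0) ∧ (∀ j, ∃! i, m i j ≠ 0)

/-! ### Auxiliary lemmas -/

lemma symmOf {n : ℕ} (z : Sn n) : (z.1).IsSymm := z.2

lemma coposOfNonneg {n : ℕ} (a : Matrix (Fin n) (Fin n) ℝ) (h : ∀ i j, 0 ≤ a i j) :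
    Copositive a := by
  intro u hu
  simp only [dotProduct, Matrix.mulVec]
  refine Finset.sum_nonneg fun i _ => mul_nonneg (hu i) ?_
  exact Finset.sum_nonneg fun j _ => mul_nonneg (h i j) (hu j)

lemma scalarZero (A B δ : ℝ) (hδ : 0 < δ) (h : ∀ τ : ℝ, |τ| ≤ δ → 0 ≤ 2*A*τ + B*τ^2) :
    A = 0 := by
  by_contra hA
  have habs : 0 < |A| := abs_pos.mpr hA
  set τ0 : ℝ := min δ (|A|/(|B|+1)) with hτ0
  have hτ0pos : 0 < τ0 := lt_min hδ (div_pos habs (by positivity))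
  have hτ0δ : τ0 ≤ δ := min_le_left _ _
  have hτ0A : τ0 * (|B|+1) ≤ |A| := by
    have := min_le_right δ (|A|/(|B|+1))
    calc τ0 * (|B|+1) ≤ (|A|/(|B|+1)) * (|B|+1) := by
          apply mul_le_mul_of_nonneg_right this (by positivity)
      _ = |A| := by field_simp
  rcases le_or_gt A 0 with hA' | hA'
  · have hAneg : A < 0 := lt_of_le_of_ne hA' hA
    have h1 := h τ0 (by rw [abs_of_pos hτ0pos]; exact hτ0δ)
    have hB : B * τ0^2 ≤ |B| * τ0 * τ0 := by
      have : B ≤ |B| := le_abs_self B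
      nlinarith
    nlinarith [abs_of_neg hAneg]
  · have h1 := h (-τ0) (by rw [abs_neg, abs_of_pos hτ0pos]; exact hτ0δ)
    have hB : B * (-τ0)^2 ≤ |B| * τ0 * τ0 := by
      have : B ≤ |B| := le_abs_self B
      nlinarith
    nlinarith [abs_of_pos hA']

lemma kkt {n : ℕ} (b : Matrix (Fin n) (Fin n) ℝ) (hb : Copositive b) (hs : b.IsSymm)
    (x : Fin n → ℝ) (hx : ∀ i, 0 ≤ x i) (h0 : x ⬝ᵥ b *ᵥ x = 0) (i : Fin n) (hi : 0 < x i) :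
    (b *ᵥ x) i = 0 := by
  have key : ∀ τ : ℝ, |τ| ≤ x i → 0 ≤ 2*((b *ᵥ x) i)*τ + (b i i)*τ^2 := by
    intro τ hτ
    set y : Fin n → ℝ := x + Pi.single i τ with hy
    have hnn : ∀ k, 0 ≤ y k := by
      intro k
      by_cases hk : k = i
      · subst hk
        simp only [hy, Pi.add_apply, Pi.single_eq_same]
        have := abs_le.mp hτ
        linarith [this.1]
      · simp [hy, Pi.single_eq_of_ne hk, hx k]
    have hq := hb _ hnn
    have expand : y ⬝ᵥ b *ᵥ y
        = x ⬝ᵥ b *ᵥ x + 2*((b *ᵥ x) i)*τ + (b i i)*τ^2 := by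
      have hsym : x ⬝ᵥ b *ᵥ Pi.single i τ = τ * (b *ᵥ x) i := by
        simp only [dotProduct, Matrix.mulVec, Pi.single_apply, mul_ite, mul_zero,
          Finset.sum_ite_eq', Finset.mem_univ, if_true]
        rw [Finset.mul_sum]
        refine Finset.sum_congr rfl fun j _ => ?_
        rw [hs.apply i j]; ring
      simp only [hy, Matrix.mulVec_add, dotProduct_add, add_dotProduct]
      rw [hsym]
      simp only [single_dotProduct, Matrix.mulVec_single, Pi.single_eq_same, Pi.smul_apply,
        op_smul_eq_mul, Matrix.col_apply]
      ring
    rw [expand, h0, zero_add] at hq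
    exact hq
  exact scalarZero _ _ _ hi key

lemma quadSingle {n : ℕ} (M : Matrix (Fin n) (Fin n) ℝ) (s : Fin n) (r : ℝ) :
    Pi.single s r ⬝ᵥ M *ᵥ Pi.single s r = r * r * M s s := by
  simp only [dotProduct, Matrix.mulVec, Pi.single_apply, mul_ite, mul_zero, ite_mul,
    zero_mul, Finset.sum_ite_eq', Finset.mem_univ, if_true]
  ring

lemma mulVecSingle {n : ℕ} (M : Matrix (Fin n) (Fin n) ℝ) (s k : Fin n) :
    (M *ᵥ Pi.single s (1:ℝ)) k = M k s := by
  simp only [Matrix.mulVec, dotProduct, Pi.single_apply, mul_ite, mul_one, mul_zero,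
    Finset.sum_ite_eq', Finset.mem_univ, if_true]

lemma quadCont {n : ℕ} (M : Matrix (Fin n) (Fin n) ℝ) :
    Continuous fun x : Fin n → ℝ => x ⬝ᵥ M *ᵥ x := by
  simp only [dotProduct, Matrix.mulVec]
  exact continuous_finset_sum _ fun i _ => (continuous_apply i).mul
    (continuous_finset_sum _ fun j _ => (continuous_const.mul (continuous_apply j)))

lemma strictPerturb {n : ℕ} (t : Fin n) (b c : Matrix (Fin n) (Fin n) ℝ)
    (hb : ∀ x : Fin n → ℝ, (∀ i, 0 ≤ x i) → x ≠ 0 → 0 < x ⬝ᵥ b *ᵥ x) :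
    ∃ ε : ℝ, 0 < ε ∧ Copositive (b - ε • c) := by
  set S : Set (Fin n → ℝ) := {x | (∀ i, 0 ≤ x i) ∧ ∑ i, x i = 1} with hS
  have hSne : S.Nonempty := by
    refine ⟨Pi.single t 1, fun i => ?_, by simp⟩
    by_cases hi : i = t
    · subst hi; simp
    · simp [Pi.single_eq_of_ne hi]
  have hScl : IsClosed S := by
    have h1 : IsClosed {x : Fin n → ℝ | ∀ i, 0 ≤ x i} := by
      have : {x : Fin n → ℝ | ∀ i, 0 ≤ x i} = ⋂ i, {x | 0 ≤ x i} :=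
        Set.ext fun x => by simp
      rw [this]
      exact isClosed_iInter fun i => isClosed_le continuous_const (continuous_apply i)
    have h2 : IsClosed {x : Fin n → ℝ | ∑ i, x i = 1} :=
      isClosed_eq (continuous_finset_sum _ fun i _ => continuous_apply i) continuous_const
    exact h1.inter h2
  have hSbd : Bornology.IsBounded S := by
    apply Bornology.IsBounded.subset (Metric.isBounded_closedBall (x := (0 : Fin n → ℝ)) (r := 1))
    intro x hx
    simp only [Metric.mem_closedBall, dist_zero_right]
    apply pi_norm_le_iff_of_nonneg zero_le_one |>.mpr
    intro i
    rw [Real.norm_eq_abs, abs_of_nonneg (hx.1 i)]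
    calc x i ≤ ∑ j, x j := Finset.single_le_sum (fun j _ => hx.1 j) (Finset.mem_univ i)
      _ = 1 := hx.2
  have hScomp : IsCompact S := Metric.isCompact_of_isClosed_isBounded hScl hSbd
  obtain ⟨x0, hx0S, hx0min⟩ := hScomp.exists_isMinOn hSne (quadCont b).continuousOn
  obtain ⟨x1, hx1S, hx1max⟩ := hScomp.exists_isMaxOn hSne (quadCont c).continuousOn
  set δ := x0 ⬝ᵥ b *ᵥ x0 with hδ
  set K := x1 ⬝ᵥ c *ᵥ x1 with hK
  have hδpos : 0 < δ := by
    apply hb x0 hx0S.1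
    intro h0
    rw [h0] at hx0S
    simpa using hx0S.2
  set m := max K 0 with hm
  have hmnn : 0 ≤ m := le_max_right _ _
  refine ⟨δ / (m + 1), by positivity, ?_⟩
  intro y hy
  by_cases hy0 : y = 0
  · simp [hy0]
  · have hr : 0 < ∑ i, y i := by
      obtain ⟨i, hi⟩ := Function.ne_iff.mp hy0
      have : 0 < y i := lt_of_le_of_ne (hy i) (Ne.symm (by simpa using hi))
      exact Finset.sum_pos' (fun j _ => hy j) ⟨i, Finset.mem_univ i, this⟩
    set r := ∑ i, y i with hrdef
    set x := r⁻¹ • y with hxdef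
    have hxS : x ∈ S := by
      constructor
      · intro i; exact mul_nonneg (inv_nonneg.mpr hr.le) (hy i)
      · simp only [hxdef, Pi.smul_apply, smul_eq_mul, ← Finset.mul_sum]
        field_simp
        rfl
    have hscale : ∀ M : Matrix (Fin n) (Fin n) ℝ, x ⬝ᵥ M *ᵥ x = r⁻¹ * r⁻¹ * (y ⬝ᵥ M *ᵥ y) := by
      intro M
      simp only [hxdef, smul_dotProduct, Matrix.mulVec_smul, dotProduct_smul,
        smul_eq_mul]
      ring
    have h1 : δ ≤ x ⬝ᵥ b *ᵥ x := hx0min hxS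
    have h2 : x ⬝ᵥ c *ᵥ x ≤ K := hx1max hxS
    have h3 : x ⬝ᵥ c *ᵥ x ≤ m := le_trans h2 (le_max_left _ _)
    have hquad : y ⬝ᵥ (b - (δ/(m+1)) • c) *ᵥ y
        = r * r * (x ⬝ᵥ b *ᵥ x - (δ/(m+1)) * (x ⬝ᵥ c *ᵥ x)) := by
      rw [Matrix.sub_mulVec, dotProduct_sub, Matrix.smul_mulVec,
        dotProduct_smul, hscale b, hscale c, smul_eq_mul]
      field_simp
    rw [hquad]
    have hcore : 0 ≤ x ⬝ᵥ b *ᵥ x - (δ/(m+1)) * (x ⬝ᵥ c *ᵥ x) := by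
      have hfrac : (δ/(m+1)) * (x ⬝ᵥ c *ᵥ x) ≤ (δ/(m+1)) * m := by
        apply mul_le_mul_of_nonneg_left h3 (by positivity)
      have : (δ/(m+1)) * m < δ := by
        rw [div_mul_eq_mul_div, mul_comm]
        rw [div_lt_iff₀ (by positivity)]
        nlinarith
      linarith
    positivity

/-- the symmetric matrix with a 1 at (s,s). -/
def diagE (n : ℕ) (s : Fin n) : Sn n :=
  ⟨Matrix.of fun i j => if i = s ∧ j = s then 1 else 0, by
    show Matrix.IsSymm _
    ext i j
    simp only [Matrix.transpose_apply, Matrix.of_apply]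
    by_cases h : i = s <;> by_cases h' : j = s <;> simp [h, h']⟩

lemma diagE_apply {n : ℕ} (s i j : Fin n) :
    (diagE n s).1 i j = if i = s ∧ j = s then 1 else 0 := rfl

lemma diagE_mulVec {n : ℕ} (s : Fin n) (v : Fin n → ℝ) (k : Fin n) :
    ((diagE n s).1 *ᵥ v) k = if k = s then v s else 0 := by
  simp only [Matrix.mulVec, dotProduct, diagE_apply, ite_mul, one_mul, zero_mul]
  by_cases h : k = s
  · subst h
    simp
  · simp [h]

lemma surjOfCn {n : ℕ} (φ : Sn n →ₗ[ℝ] Sn n) (hφ : φ '' Cn n = Cn n) :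
    Function.Surjective φ := by
  have hC : ∀ z ∈ Cn n, ∃ w, φ w = z := by
    intro z hz
    have : z ∈ φ '' Cn n := by rw [hφ]; exact hz
    obtain ⟨w, _, hw⟩ := this
    exact ⟨w, hw⟩
  intro z
  set P : Matrix (Fin n) (Fin n) ℝ := Matrix.of fun i j => max (z.1 i j) 0 with hP
  set N : Matrix (Fin n) (Fin n) ℝ := Matrix.of fun i j => max (-(z.1 i j)) 0 with hN
  have hPsymm : P.IsSymm := by
    ext i j
    simp only [Matrix.transpose_apply, hP, Matrix.of_apply, (symmOf z).apply i j]
  have hNsymm : N.IsSymm := by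
    ext i j
    simp only [Matrix.transpose_apply, hN, Matrix.of_apply, (symmOf z).apply i j]
  have hPC : (⟨P, hPsymm⟩ : Sn n) ∈ Cn n :=
    coposOfNonneg P fun i j => le_max_right _ _
  have hNC : (⟨N, hNsymm⟩ : Sn n) ∈ Cn n :=
    coposOfNonneg N fun i j => le_max_right _ _
  obtain ⟨w1, hw1⟩ := hC _ hPC
  obtain ⟨w2, hw2⟩ := hC _ hNC
  refine ⟨w1 - w2, ?_⟩
  rw [map_sub, hw1, hw2]
  apply Subtype.ext
  show P - N = z.1
  ext i j
  simp only [Matrix.sub_apply, hP, hN, Matrix.of_apply]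
  rcases le_or_gt (z.1 i j) 0 with h | h
  · rw [max_eq_right h, max_eq_left (by linarith)]; ring
  · rw [max_eq_left h.le, max_eq_right (by linarith)]; ring

lemma injOfCn {n : ℕ} (φ : Sn n →ₗ[ℝ] Sn n) (hφ : φ '' Cn n = Cn n) :
    Function.Injective φ :=
  (LinearMap.injective_iff_surjective).mpr (surjOfCn φ hφ)

lemma memCnIff {n : ℕ} (φ : Sn n →ₗ[ℝ] Sn n) (hφ : φ '' Cn n = Cn n) (z : Sn n) :
    φ z ∈ Cn n ↔ z ∈ Cn n := by
  constructor
  · intro h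
    rw [← hφ] at h
    obtain ⟨w, hwC, hw⟩ := h
    rwa [← injOfCn φ hφ hw]
  · intro h
    rw [← hφ]
    exact ⟨z, h, rfl⟩

lemma qi {n : ℕ} (t : Fin n) (a c : Sn n)
    (ha0 : a.1 t t = 0) (hapos : ∀ i j, (i, j) ≠ (t, t) → 0 < a.1 i j)
    (hc0 : c.1 t t = 0) :
    ∃ ε : ℝ, 0 < ε ∧ Copositive (a.1 - ε • c.1) := by
  have hne : (Finset.univ : Finset (Fin n × Fin n)).Nonempty := ⟨(t, t), Finset.mem_univ _⟩
  set f : Fin n × Fin n → ℝ :=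
    fun p => if p = (t, t) then 1 else a.1 p.1 p.2 / (|c.1 p.1 p.2| + 1) with hf
  set ε := Finset.univ.inf' hne f with hε
  have hεpos : 0 < ε := by
    rw [hε, Finset.lt_inf'_iff]
    intro p _
    by_cases hp : p = (t, t)
    · simp [hf, hp]
    · have := hapos p.1 p.2 (by simpa using hp)
      simp only [hf, hp, if_false]
      positivity
  refine ⟨ε, hεpos, ?_⟩
  apply coposOfNonneg
  intro i j
  simp only [Matrix.sub_apply, Matrix.smul_apply, smul_eq_mul]
  by_cases hij : (i, j) = (t, t)
  · have hi : i = t := (Prod.mk.injEq _ _ _ _ ▸ hij).1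
    have hj : j = t := (Prod.mk.injEq _ _ _ _ ▸ hij).2
    subst hi; subst hj
    rw [ha0, hc0]; ring_nf; simp
  · have hle : ε ≤ a.1 i j / (|c.1 i j| + 1) := by
      have hle0 : ε ≤ f (i, j) := Finset.inf'_le f (Finset.mem_univ _)
      simpa only [hf, if_neg hij] using hle0
    have h1 : ε * c.1 i j ≤ ε * (|c.1 i j| + 1) := by
      apply mul_le_mul_of_nonneg_left _ hεpos.le
      have := le_abs_self (c.1 i j); linarith
    have h2 : ε * (|c.1 i j| + 1) ≤ a.1 i j := by
      calc ε * (|c.1 i j| + 1) ≤ (a.1 i j / (|c.1 i j| + 1)) * (|c.1 i j| + 1) := by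
            apply mul_le_mul_of_nonneg_right hle (by positivity)
        _ = a.1 i j := by field_simp
    linarith

lemma funvanish {n : ℕ} (φ : Sn n →ₗ[ℝ] Sn n) (t : Fin n) (v : Fin n → ℝ) (k : Fin n)
    (h : ∀ c : Sn n, Copositive c.1 → c.1 t t = 0 → ((φ c).1 *ᵥ v) k = 0) (c : Sn n) :
    ((φ c).1 *ᵥ v) k = c.1 t t * ((φ (diagE n t)).1 *ᵥ v) k := by
  set P : Matrix (Fin n) (Fin n) ℝ :=
    Matrix.of fun i j => if i = t ∧ j = t then 0 else max (c.1 i j) 0 with hP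
  set N : Matrix (Fin n) (Fin n) ℝ :=
    Matrix.of fun i j => if i = t ∧ j = t then 0 else max (-(c.1 i j)) 0 with hN
  have hPsymm : P.IsSymm := by
    ext i j
    simp only [Matrix.transpose_apply, hP, Matrix.of_apply, (symmOf c).apply i j, and_comm]
  have hNsymm : N.IsSymm := by
    ext i j
    simp only [Matrix.transpose_apply, hN, Matrix.of_apply, (symmOf c).apply i j, and_comm]
  set Ps : Sn n := ⟨P, hPsymm⟩ with hPs
  set Ns : Sn n := ⟨N, hNsymm⟩ with hNs
  have hdecomp : c = Ps - Ns + (c.1 t t) • diagE n t := by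
    apply Subtype.ext
    show c.1 = P - N + (c.1 t t) • (diagE n t).1
    ext i j
    simp only [Matrix.add_apply, Matrix.sub_apply, Matrix.smul_apply, hP, hN,
      Matrix.of_apply, diagE_apply, smul_eq_mul]
    by_cases hij : i = t ∧ j = t
    · obtain ⟨hi, hj⟩ := hij
      subst hi; subst hj
      simp
    · simp only [hij, if_false, mul_zero, add_zero]
      rcases le_or_gt (c.1 i j) 0 with hcle | hcle
      · rw [max_eq_right hcle, max_eq_left (by linarith)]; ring
      · rw [max_eq_left hcle.le, max_eq_right (by linarith)]; ring
  have hPzero : ((φ Ps).1 *ᵥ v) k = 0 := by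
    apply h
    · exact coposOfNonneg P fun i j => by
        simp only [hP, Matrix.of_apply]
        split <;> simp [le_max_right]
    · show P t t = 0
      simp [hP]
  have hNzero : ((φ Ns).1 *ᵥ v) k = 0 := by
    apply h
    · exact coposOfNonneg N fun i j => by
        simp only [hN, Matrix.of_apply]
        split <;> simp [le_max_right]
    · show N t t = 0
      simp [hN]
  conv_lhs => rw [hdecomp]
  rw [map_add, map_sub, LinearMap.map_smul]
  have hcoe : ((φ Ps - φ Ns + c.1 t t • φ (diagE n t)) : Sn n).1
      = (φ Ps).1 - (φ Ns).1 + c.1 t t • (φ (diagE n t)).1 := by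
    simp
  rw [hcoe]
  simp only [Matrix.add_mulVec, Matrix.sub_mulVec, Matrix.smul_mulVec,
    Pi.add_apply, Pi.sub_apply, Pi.smul_apply, smul_eq_mul, hPzero, hNzero]
  ring

/-- There is a nonnegative vector uᵗ with exactly one nonzero coordinate whose ray is the
common kernel of all b ∈ φ(A^t). -/
theorem stmt_11 (n : ℕ) (φ : Sn n →ₗ[ℝ] Sn n) (hφ : φ '' Cn n = Cn n) (t : Fin n) :
    ∃ u : Fin n → ℝ, (∀ i, 0 ≤ u i) ∧ (∃! i, u i ≠ 0) ∧
      ∀ b ∈ φ '' At n t,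
        {x : Fin n → ℝ | (∀ i, 0 ≤ x i) ∧ x ⬝ᵥ b.1 *ᵥ x = 0} =
          {x : Fin n → ℝ | ∃ lam : ℝ, 0 ≤ lam ∧ x = lam • u} := by
  have hsurj := surjOfCn φ hφ
  have hmem := memCnIff φ hφ
  -- the all-ones matrix with a zero (t,t) entry
  have ha0symm : (Matrix.of fun i j => if i = t ∧ j = t then (0:ℝ) else 1).IsSymm := by
    ext i j
    simp only [Matrix.transpose_apply, Matrix.of_apply, and_comm]
  set a0 : Sn n := ⟨Matrix.of fun i j => if i = t ∧ j = t then (0:ℝ) else 1, ha0symm⟩ with ha0def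
  have ha0t : a0.1 t t = 0 := by simp [ha0def]
  have ha0pos : ∀ i j, (i, j) ≠ (t, t) → 0 < a0.1 i j := by
    intro i j hij
    have : ¬(i = t ∧ j = t) := by
      intro ⟨h1, h2⟩; exact hij (by rw [h1, h2])
    simp [ha0def, this]
  have ha0C : a0 ∈ Cn n := coposOfNonneg _ fun i j => by
    show (0:ℝ) ≤ if i = t ∧ j = t then 0 else 1
    split <;> norm_num
  -- vanishing of quadratic forms on all of φ(F_t)
  have hvan : ∀ a : Sn n, a.1 t t = 0 → (∀ i j, (i, j) ≠ (t, t) → 0 < a.1 i j) →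
      ∀ v : Fin n → ℝ, (∀ i, 0 ≤ v i) → v ⬝ᵥ (φ a).1 *ᵥ v = 0 →
      ∀ c : Sn n, Copositive c.1 → c.1 t t = 0 → v ⬝ᵥ (φ c).1 *ᵥ v = 0 := by
    intro a hat hap v hv hva c hcC hct
    obtain ⟨ε, hεpos, hcop⟩ := qi t a c hat hap hct
    have hmemC : (a - ε • c) ∈ Cn n := by
      show Copositive ((a - ε • c : Sn n) : Matrix (Fin n) (Fin n) ℝ)
      have hco : ((a - ε • c : Sn n) : Matrix (Fin n) (Fin n) ℝ) = a.1 - ε • c.1 := by simp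
      rw [hco]; exact hcop
    have hφC : φ (a - ε • c) ∈ Cn n := (hmem _).mpr hmemC
    have h1 : 0 ≤ v ⬝ᵥ (φ (a - ε • c)).1 *ᵥ v := hφC v hv
    have hexpand : (φ (a - ε • c)).1 = (φ a).1 - ε • (φ c).1 := by
      rw [map_sub, LinearMap.map_smul]; simp
    rw [hexpand, Matrix.sub_mulVec, dotProduct_sub, Matrix.smul_mulVec,
      dotProduct_smul, hva, smul_eq_mul] at h1
    have h2 : 0 ≤ v ⬝ᵥ (φ c).1 *ᵥ v := (hmem c).mpr hcC v hv
    nlinarith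
  -- support of any kernel vector is a singleton
  have hsingle : ∀ a : Sn n, a.1 t t = 0 → (∀ i j, (i, j) ≠ (t, t) → 0 < a.1 i j) →
      ∀ v : Fin n → ℝ, (∀ i, 0 ≤ v i) → v ⬝ᵥ (φ a).1 *ᵥ v = 0 →
      ∀ i j, 0 < v i → 0 < v j → i = j := by
    intro a hat hap v hv hva i j hvi hvj
    by_contra hij
    have hLi : ∀ c : Sn n, Copositive c.1 → c.1 t t = 0 → ((φ c).1 *ᵥ v) i = 0 := by
      intro c hcC hct
      exact kkt (φ c).1 ((hmem c).mpr hcC) (symmOf _) v hv (hvan a hat hap v hv hva c hcC hct) i hvi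
    have hLj : ∀ c : Sn n, Copositive c.1 → c.1 t t = 0 → ((φ c).1 *ᵥ v) j = 0 := by
      intro c hcC hct
      exact kkt (φ c).1 ((hmem c).mpr hcC) (symmOf _) v hv (hvan a hat hap v hv hva c hcC hct) j hvj
    obtain ⟨ci, hci⟩ := hsurj (diagE n i)
    obtain ⟨cj, hcj⟩ := hsurj (diagE n j)
    have e1 := funvanish φ t v i hLi ci
    have e2 := funvanish φ t v j hLj ci
    have e3 := funvanish φ t v j hLj cj
    rw [hci, diagE_mulVec] at e1 e2
    rw [hcj, diagE_mulVec] at e3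
    simp only [if_pos rfl] at e1 e3
    rw [if_neg (fun h => hij h.symm)] at e2
    have hcit : ci.1 t t ≠ 0 := by
      intro h0
      rw [h0, zero_mul] at e1
      exact hvi.ne' e1
    have hκj : ((φ (diagE n t)).1 *ᵥ v) j = 0 := by
      rcases mul_eq_zero.mp e2.symm with h | h
      · exact absurd h hcit
      · exact h
    rw [hκj, mul_zero] at e3
    exact hvj.ne' e3
  -- existence of a nonzero kernel vector for φ a0
  have hb0C : φ a0 ∈ Cn n := (hmem a0).mpr ha0C
  have hxex : ∃ x : Fin n → ℝ, (∀ i, 0 ≤ x i) ∧ x ≠ 0 ∧ x ⬝ᵥ (φ a0).1 *ᵥ x = 0 := by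
    by_contra hcon
    push_neg at hcon
    have hstrict : ∀ x : Fin n → ℝ, (∀ i, 0 ≤ x i) → x ≠ 0 → 0 < x ⬝ᵥ (φ a0).1 *ᵥ x := by
      intro x h1 h2
      exact lt_of_le_of_ne (hb0C x h1) (Ne.symm (hcon x h1 h2))
    obtain ⟨ε, hεpos, hcop⟩ := strictPerturb t (φ a0).1 ((φ (diagE n t)).1) hstrict
    have heq : (φ a0).1 - ε • (φ (diagE n t)).1 = (φ (a0 - ε • diagE n t)).1 := by
      rw [map_sub, LinearMap.map_smul]; simp
    rw [heq] at hcop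
    have hmem2 : (a0 - ε • diagE n t) ∈ Cn n := (hmem _).mp hcop
    have hq := hmem2 (Pi.single t 1) (fun i => by
      by_cases hi : i = t
      · subst hi; simp
      · simp [Pi.single_eq_of_ne hi])
    have hqval : Pi.single t 1 ⬝ᵥ ((a0 - ε • diagE n t : Sn n) : Matrix (Fin n) (Fin n) ℝ)
        *ᵥ Pi.single t 1 = -ε := by
      have hco : ((a0 - ε • diagE n t : Sn n) : Matrix (Fin n) (Fin n) ℝ)
          = a0.1 - ε • (diagE n t).1 := by simp
      rw [hco, quadSingle]
      simp only [Matrix.sub_apply, Matrix.smul_apply, smul_eq_mul, ha0t, diagE_apply]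
      simp
    rw [hqval] at hq
    linarith
  obtain ⟨x, hx, hxne, hxq⟩ := hxex
  obtain ⟨s, hs⟩ := Function.ne_iff.mp hxne
  have hxs : 0 < x s := lt_of_le_of_ne (hx s) (Ne.symm (by simpa using hs))
  have hxo : ∀ i, i ≠ s → x i = 0 := by
    intro i hi
    rcases lt_or_eq_of_le (hx i) with h | h
    · exact absurd (hsingle a0 ha0t ha0pos x hx hxq i s h hxs) hi
    · exact h.symm
  -- quadratic form of a vector supported at one coordinate
  have hsupp : ∀ (v : Fin n → ℝ) (s' : Fin n), (∀ i, i ≠ s' → v i = 0) →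
      ∀ M : Matrix (Fin n) (Fin n) ℝ, v ⬝ᵥ M *ᵥ v = v s' * v s' * M s' s' := by
    intro v s' hvo M
    have hv : v = Pi.single s' (v s') := by
      funext i
      by_cases hi : i = s'
      · subst hi; simp
      · simp [Pi.single_eq_of_ne hi, hvo i hi]
    calc v ⬝ᵥ M *ᵥ v = Pi.single s' (v s') ⬝ᵥ M *ᵥ Pi.single s' (v s') := by rw [← hv]
      _ = v s' * v s' * M s' s' := quadSingle M s' (v s')
  -- every member of φ(F_t) has zero (s,s) entry
  have hss : ∀ c : Sn n, Copositive c.1 → c.1 t t = 0 → (φ c).1 s s = 0 := by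
    intro c hcC hct
    have h0 := hvan a0 ha0t ha0pos x hx hxq c hcC hct
    rw [hsupp x s hxo] at h0
    rcases mul_eq_zero.mp h0 with h | h
    · exact absurd h (mul_pos hxs hxs).ne'
    · exact h
  -- uniqueness of the distinguished index s
  have huniq : ∀ s' : Fin n, (∀ c : Sn n, Copositive c.1 → c.1 t t = 0 → (φ c).1 s' s' = 0) →
      s' = s := by
    intro s' hs'
    by_contra hne
    have hLs : ∀ c : Sn n, Copositive c.1 → c.1 t t = 0 →
        ((φ c).1 *ᵥ Pi.single s (1:ℝ)) s = 0 := by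
      intro c h1 h2
      rw [mulVecSingle]
      exact hss c h1 h2
    have hLs' : ∀ c : Sn n, Copositive c.1 → c.1 t t = 0 →
        ((φ c).1 *ᵥ Pi.single s' (1:ℝ)) s' = 0 := by
      intro c h1 h2
      rw [mulVecSingle]
      exact hs' c h1 h2
    obtain ⟨cs, hcs⟩ := hsurj (diagE n s)
    obtain ⟨cs', hcs'⟩ := hsurj (diagE n s')
    have e1 := funvanish φ t (Pi.single s 1) s hLs cs
    have e2 := funvanish φ t (Pi.single s' 1) s' hLs' cs
    have e3 := funvanish φ t (Pi.single s' 1) s' hLs' cs'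
    rw [hcs, mulVecSingle] at e1 e2
    rw [hcs', mulVecSingle] at e3
    rw [mulVecSingle] at e1 e2 e3
    rw [diagE_apply, if_pos ⟨rfl, rfl⟩] at e1
    rw [diagE_apply, if_neg (by intro ⟨h1, _⟩; exact hne h1)] at e2
    rw [diagE_apply, if_pos ⟨rfl, rfl⟩] at e3
    have hcst : cs.1 t t ≠ 0 := by
      intro h0
      rw [h0, zero_mul] at e1
      exact one_ne_zero e1
    have hκ' : (φ (diagE n t)).1 s' s' = 0 := by
      rcases mul_eq_zero.mp e2.symm with h | h
      · exact absurd h hcst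
      · exact h
    rw [hκ', mul_zero] at e3
    exact one_ne_zero e3
  -- conclusion
  refine ⟨Pi.single s 1, fun i => ?_, ⟨s, by simp, fun i hi => ?_⟩, ?_⟩
  · by_cases hi : i = s
    · subst hi; simp
    · simp [Pi.single_eq_of_ne hi]
  · by_contra hne
    simp only [Pi.single_eq_of_ne hne] at hi
    exact hi rfl
  · rintro b ⟨a, haAt, rfl⟩
    obtain ⟨hat, hapos⟩ := haAt
    have haC : Copositive a.1 := coposOfNonneg _ fun i j => by
      by_cases hij : (i, j) = (t, t)
      · have hi : i = t := (Prod.mk.injEq _ _ _ _ ▸ hij).1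
        have hj : j = t := (Prod.mk.injEq _ _ _ _ ▸ hij).2
        subst hi; subst hj
        rw [hat]
      · exact (hapos i j hij).le
    have hbss : (φ a).1 s s = 0 := hss a haC hat
    ext y
    simp only [Set.mem_setOf_eq]
    constructor
    · rintro ⟨hy0, hyq⟩
      by_cases hy : y = 0
      · exact ⟨0, le_refl 0, by rw [hy, zero_smul]⟩
      · obtain ⟨i0, hi0⟩ := Function.ne_iff.mp hy
        have hi0pos : 0 < y i0 := lt_of_le_of_ne (hy0 i0) (Ne.symm (by simpa using hi0))
        have hyo : ∀ i, i ≠ i0 → y i = 0 := by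
          intro i hi
          rcases lt_or_eq_of_le (hy0 i) with h | h
          · exact absurd (hsingle a hat hapos y hy0 hyq i i0 h hi0pos) hi
          · exact h.symm
        have hss' : ∀ c : Sn n, Copositive c.1 → c.1 t t = 0 → (φ c).1 i0 i0 = 0 := by
          intro c h1 h2
          have h0 := hvan a hat hapos y hy0 hyq c h1 h2
          rw [hsupp y i0 hyo] at h0
          rcases mul_eq_zero.mp h0 with h | h
          · exact absurd h (mul_pos hi0pos hi0pos).ne'
          · exact h
        have hi0s : i0 = s := huniq i0 hss'
        subst hi0s
        refine ⟨y i0, hi0pos.le, funext fun i => ?_⟩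
        by_cases hi : i = i0
        · subst hi; simp
        · simp [Pi.single_eq_of_ne hi, hyo i hi]
    · rintro ⟨lam, hlam, rfl⟩
      constructor
      · intro i
        by_cases hi : i = s
        · subst hi; simpa using hlam
        · simp [Pi.single_eq_of_ne hi]
      · have hvs : lam • (Pi.single s 1 : Fin n → ℝ) = (Pi.single s lam : Fin n → ℝ) := by
          funext i
          by_cases hi : i = s
          · subst hi; simp
          · simp [Pi.single_eq_of_ne hi]
        rw [hvs, quadSingle, hbss, mul_zero]
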